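/- Let π be an ε-almost representation. Suppose there exist c > 0 and 0 < δ < c/2 such that ⟨d₁d₁*f, f⟩_{C¹} > c⟨f,f⟩_{C¹} for every f ∈ B¹(δ²/|T|). Then either there exists a nonzero u ∈ H with ‖π(s)u − u‖ < δ‖u‖ for all s ∈ S, or max_{s∈S} ‖π(s)u − u‖ ≥ (c/2)‖u‖ for every u ∈ H. -/

import Mathlib

open Finset ContinuousLinearMap

def edgeSet {G : Type*} [Group G] [DecidableEq G] (S : Finset G) : Finset (G × G) :=
  (S ×ˢ S).filter fun p => p.1⁻¹ * p.2 ∈ S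

def deg {G : Type*} [Group G] [DecidableEq G] (S : Finset G) (s : G) : ℕ :=
  (S.filter fun s' => s⁻¹ * s' ∈ S).card

def IsAlmostRep {G : Type*} [Group G] {H : Type*} [NormedAddCommGroup H]
    [InnerProductSpace ℂ H] [CompleteSpace H]
    (S : Finset G) (ε : ℝ) (π : G → H →L[ℂ] H) : Prop :=
  (∀ s ∈ S, π s ∈ unitary (H →L[ℂ] H)) ∧
  (∀ s ∈ S, π s⁻¹ = star (π s)) ∧
  ∀ s₁ ∈ S, ∀ s₂ ∈ S, s₁ * s₂ ∈ S → ‖π (s₁ * s₂) - (π s₁).comp (π s₂)‖ ≤ ε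

/-- `d₂ f ((s,s')) = f(s) − f(s') + π(s) f(s⁻¹s')`. -/
def d2 {G : Type*} [Group G] {H : Type*} [NormedAddCommGroup H] [InnerProductSpace ℂ H]
    (π : G → H →L[ℂ] H) (f : G → H) (p : G × G) : H :=
  f p.1 - f p.2 + π p.1 (f (p.1⁻¹ * p.2))

/-- The graph `L(S)`: vertices in `S`, with `s ∼ s'` iff `s, s', s⁻¹s' ∈ S` (and `s ≠ s'`). -/
def lGraph {G : Type*} [Group G] (S : Finset G) : SimpleGraph G where
  Adj s s' := s ∈ S ∧ s' ∈ S ∧ s⁻¹ * s' ∈ S ∧ s'⁻¹ * s ∈ S ∧ s ≠ s'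
  symm := by constructor; intro a b h; exact ⟨h.2.1, h.1, h.2.2.2.1, h.2.2.1, h.2.2.2.2.symm⟩
  loopless := by constructor; intro a h; exact h.2.2.2.2 rfl

/-- `μ` is an eigenvalue of the discrete Laplacian
`Δf(s) = f(s) − (1/deg s) ∑_{s'∼s} f(s')` of the graph `L(S)`. -/
def IsLapEig {G : Type*} [Group G] [DecidableEq G] (S : Finset G) (μ : ℝ) : Prop :=
  ∃ g : G → ℝ, (∃ s ∈ S, g s ≠ 0) ∧ ∀ s ∈ S,
    g s - ((deg S s : ℝ))⁻¹ * ∑ s' ∈ S.filter (fun t => s⁻¹ * t ∈ S), g s' = μ * g s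

/-- `d₁* f = −2 ∑_{s∈S} f(s) n(s)/|T|`. -/
noncomputable def d1star {G : Type*} [Group G] [DecidableEq G]
    {H : Type*} [NormedAddCommGroup H] [InnerProductSpace ℂ H]
    (S : Finset G) (f : G → H) : H :=
  (-(2 / ((edgeSet S).card : ℂ))) • ∑ s ∈ S, (deg S s : ℂ) • f s


set_option linter.unusedSectionVars false
section SPAux

variable {G : Type*} [Group G] [DecidableEq G]
variable {H : Type*} [NormedAddCommGroup H] [InnerProductSpace ℂ H] [CompleteSpace H]

local notation "⟪" x ", " y "⟫" => (inner ℂ x y : ℂ)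

namespace SP

lemma card_edge (S : Finset G) : (edgeSet S).card = ∑ s ∈ S, deg S s := by
  rw [Finset.card_eq_sum_card_fiberwise (f := Prod.fst) (t := S)
    (fun p hp => by
      simp only [Finset.mem_coe, edgeSet, Finset.mem_filter, Finset.mem_product] at hp
      exact hp.1.1)]
  refine Finset.sum_congr rfl fun a ha => ?_
  unfold deg
  refine Finset.card_bij' (fun p _ => p.2) (fun b _ => (a, b)) ?_ ?_ ?_ ?_
  · intro p hp
    simp only [edgeSet, Finset.mem_filter, Finset.mem_product] at hp ⊢
    obtain ⟨⟨⟨h1, h2⟩, h3⟩, h4⟩ := hp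
    subst h4
    exact ⟨h2, h3⟩
  · intro b hb
    simp only [edgeSet, Finset.mem_filter, Finset.mem_product] at hb ⊢
    exact ⟨⟨⟨ha, hb.1⟩, hb.2⟩, trivial⟩
  · intro p hp
    obtain ⟨p1, p2⟩ := p
    simp only [edgeSet, Finset.mem_filter, Finset.mem_product] at hp
    simp [hp.2]
  · intro b _
    rfl

lemma deg_inv (S : Finset G) {s : G} : deg S s⁻¹ = deg S s := by
  unfold deg
  rw [inv_inv]
  refine Finset.card_bij' (fun b _ => s * b) (fun b _ => s⁻¹ * b) ?_ ?_ ?_ ?_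
  · intro b hb
    simp only [Finset.mem_filter] at hb ⊢
    exact ⟨hb.2, by simpa using hb.1⟩
  · intro b hb
    simp only [Finset.mem_filter] at hb ⊢
    exact ⟨hb.2, by simpa using hb.1⟩
  · intro b _; simp
  · intro b _; simp

variable {S : Finset G} {ε : ℝ} {π : G → H →L[ℂ] H}

lemma pi_inv_app (hπ : IsAlmostRep S ε π) {s : G} (hs : s ∈ S) (y : H) :
    π s⁻¹ (π s y) = y := by
  have h1 : star (π s) * π s = 1 := (Unitary.mem_iff.1 (hπ.1 s hs)).1
  rw [hπ.2.1 s hs]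
  calc star (π s) (π s y) = (star (π s) * π s) y := rfl
    _ = y := by rw [h1]; rfl

lemma pi_app_inv (hπ : IsAlmostRep S ε π) {s : G} (hs : s ∈ S) (y : H) :
    π s (π s⁻¹ y) = y := by
  have h1 : π s * star (π s) = 1 := (Unitary.mem_iff.1 (hπ.1 s hs)).2
  rw [hπ.2.1 s hs]
  calc π s (star (π s) y) = (π s * star (π s)) y := rfl
    _ = y := by rw [h1]; rfl

lemma norm_pi (hπ : IsAlmostRep S ε π) {s : G} (hs : s ∈ S) (y : H) :
    ‖π s y‖ = ‖y‖ :=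
  ContinuousLinearMap.norm_map_of_mem_unitary (hπ.1 s hs) y

lemma inner_pi_right (hπ : IsAlmostRep S ε π) {s : G} (hs : s ∈ S) (v z : H) :
    ⟪v, π s z⟫ = ⟪π s⁻¹ v, z⟫ := by
  rw [hπ.2.1 s hs, ContinuousLinearMap.star_eq_adjoint,
    ContinuousLinearMap.adjoint_inner_left]

lemma norm_d1_inv (hπ : IsAlmostRep S ε π) (hsym : ∀ s ∈ S, s⁻¹ ∈ S)
    {s : G} (hs : s ∈ S) (y : H) :
    ‖π s⁻¹ y - y‖ = ‖π s y - y‖ := by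
  have h : π s⁻¹ y - y = π s⁻¹ (y - π s y) := by
    rw [map_sub, pi_inv_app hπ hs]
  rw [h, norm_pi hπ (hsym s hs), norm_sub_rev]

lemma sum_pairing (hπ : IsAlmostRep S ε π) (hsym : ∀ s ∈ S, s⁻¹ ∈ S) (y z : H) :
    ∑ s ∈ S, (deg S s : ℂ) * ⟪π s y - y, π s z - z⟫
      = (-2 : ℂ) * ∑ s ∈ S, (deg S s : ℂ) * ⟪π s y - y, z⟫ := by
  have h1 : ∀ s ∈ S, (deg S s : ℂ) * ⟪π s y - y, π s z - z⟫
      = -((deg S s : ℂ) * ⟪π s⁻¹ y - y, z⟫) - (deg S s : ℂ) * ⟪π s y - y, z⟫ := by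
    intro s hs
    have h2 : ⟪π s y - y, π s z⟫ = ⟪π s⁻¹ (π s y - y), z⟫ := inner_pi_right hπ hs _ _
    have h3 : π s⁻¹ (π s y - y) = -(π s⁻¹ y - y) := by
      rw [map_sub, pi_inv_app hπ hs]; abel
    rw [inner_sub_right, h2, h3, inner_neg_left]
    ring
  rw [Finset.sum_congr rfl h1, Finset.sum_sub_distrib, Finset.sum_neg_distrib]
  have h4 : ∑ s ∈ S, (deg S s : ℂ) * ⟪π s⁻¹ y - y, z⟫
      = ∑ s ∈ S, (deg S s : ℂ) * ⟪π s y - y, z⟫ := by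
    refine Finset.sum_nbij' (fun s => s⁻¹) (fun s => s⁻¹) ?_ ?_ ?_ ?_ ?_
    · exact fun a ha => hsym a ha
    · exact fun a ha => hsym a ha
    · simp
    · simp
    · intro a ha
      rw [deg_inv]
  rw [h4]; ring

noncomputable def Aop (S : Finset G) (π : G → H →L[ℂ] H) (y : H) : H :=
  d1star S (fun s => π s y - y)

lemma inner_Aop (hπ : IsAlmostRep S ε π) (hsym : ∀ s ∈ S, s⁻¹ ∈ S)
    (hT : ((edgeSet S).card : ℂ) ≠ 0) (y z : H) :
    ⟪Aop S π y, z⟫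
      = ((edgeSet S).card : ℂ)⁻¹ * ∑ s ∈ S, (deg S s : ℂ) * ⟪π s y - y, π s z - z⟫ := by
  have hunf : ⟪Aop S π y, z⟫
      = -(2 / ((edgeSet S).card : ℂ)) * ∑ s ∈ S, (deg S s : ℂ) * ⟪π s y - y, z⟫ := by
    unfold Aop d1star
    rw [inner_smul_left, sum_inner]
    have hconj : (starRingEnd ℂ) (-(2 / ((edgeSet S).card : ℂ)))
        = -(2 / ((edgeSet S).card : ℂ)) := by
      simp [map_div₀, map_ofNat]
    rw [hconj]
    congr 1
    refine Finset.sum_congr rfl fun s _ => ?_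
    rw [inner_smul_left]
    congr 1
    simp
  rw [hunf, sum_pairing hπ hsym]
  field_simp

lemma re_inner_Aop (hπ : IsAlmostRep S ε π) (hsym : ∀ s ∈ S, s⁻¹ ∈ S)
    (hT : 0 < (edgeSet S).card) (y : H) :
    (inner ℂ (Aop S π y) y : ℂ).re
      = (((edgeSet S).card : ℝ))⁻¹ * ∑ s ∈ S, (deg S s : ℝ) * ‖π s y - y‖ ^ 2 := by
  have hTc : ((edgeSet S).card : ℂ) ≠ 0 := by
    exact_mod_cast Nat.cast_ne_zero.mpr hT.ne'
  rw [inner_Aop hπ hsym hTc y y]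
  rw [show ((edgeSet S).card : ℂ)⁻¹ = (((((edgeSet S).card : ℝ))⁻¹ : ℝ) : ℂ) by
    rw [Complex.ofReal_inv, Complex.ofReal_natCast]]
  rw [Complex.re_ofReal_mul, Complex.re_sum]
  congr 1
  refine Finset.sum_congr rfl fun s _ => ?_
  rw [show ((deg S s : ℂ)) = (((deg S s : ℝ) : ℝ) : ℂ) from (Complex.ofReal_natCast _).symm]
  rw [Complex.re_ofReal_mul]
  congr 1
  have := @inner_self_eq_norm_sq ℂ _ _ _ _ (π s y - y)
  simpa using this

lemma inner_Aop_symm (hπ : IsAlmostRep S ε π) (hsym : ∀ s ∈ S, s⁻¹ ∈ S)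
    (hT : ((edgeSet S).card : ℂ) ≠ 0) (y z : H) :
    ⟪Aop S π z, y⟫ = (starRingEnd ℂ) ⟪Aop S π y, z⟫ := by
  rw [inner_Aop hπ hsym hT y z, inner_Aop hπ hsym hT z y, map_mul, map_sum]
  congr 1
  · simp
  · refine Finset.sum_congr rfl fun s _ => ?_
    rw [map_mul, inner_conj_symm]
    simp only [map_natCast]

lemma Aop_sub (y z : H) : Aop S π (y - z) = Aop S π y - Aop S π z := by
  unfold Aop d1star
  rw [← smul_sub, ← Finset.sum_sub_distrib]
  congr 1
  refine Finset.sum_congr rfl fun s _ => ?_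
  rw [← smul_sub]
  congr 1
  show π s (y - z) - (y - z) = (π s y - y) - (π s z - z)
  rw [map_sub]
  abel

lemma Aop_smul (a : ℂ) (y : H) : Aop S π (a • y) = a • Aop S π y := by
  unfold Aop d1star
  have h1 : (fun s => π s (a • y) - a • y) = fun s => a • (π s y - y) := by
    funext s; rw [map_smul, smul_sub]
  rw [h1]
  rw [show ∑ s ∈ S, (deg S s : ℂ) • a • (π s y - y)
      = a • ∑ s ∈ S, (deg S s : ℂ) • (π s y - y) by
    rw [Finset.smul_sum]
    exact Finset.sum_congr rfl fun s _ => smul_comm _ _ _]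
  rw [smul_comm]

lemma q_expand (hπ : IsAlmostRep S ε π) (hsym : ∀ s ∈ S, s⁻¹ ∈ S)
    (hT : ((edgeSet S).card : ℂ) ≠ 0) (y z : H) (t : ℝ) :
    (inner ℂ (Aop S π (y - (t:ℂ) • z)) (y - (t:ℂ) • z) : ℂ).re
      = (inner ℂ (Aop S π y) y : ℂ).re - 2*t*(inner ℂ (Aop S π y) z : ℂ).re
        + t^2 * (inner ℂ (Aop S π z) z : ℂ).re := by
  have hzy : (⟪Aop S π z, y⟫).re = (⟪Aop S π y, z⟫).re := by
    rw [inner_Aop_symm hπ hsym hT, Complex.conj_re]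
  rw [Aop_sub, Aop_smul]
  simp only [inner_sub_left, inner_sub_right, inner_smul_left, inner_smul_right,
    Complex.conj_ofReal, Complex.sub_re, Complex.re_ofReal_mul]
  rw [hzy]
  ring

lemma norm_expand (y z : H) (t : ℝ) :
    ‖y - (t:ℂ) • z‖^2 = ‖y‖^2 - 2*t*(inner ℂ y z : ℂ).re + t^2*‖z‖^2 := by
  rw [@norm_sub_sq ℂ, inner_smul_right, norm_smul]
  simp only [Complex.re_ofReal_mul, Complex.norm_real, RCLike.re_to_complex,
    Real.norm_eq_abs, mul_pow, sq_abs]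
  ring

lemma norm_Aop_le (hπ : IsAlmostRep S ε π) (hsym : ∀ s ∈ S, s⁻¹ ∈ S)
    (hT : 0 < (edgeSet S).card) (y : H) :
    ‖Aop S π y‖^2 ≤ 4 * (inner ℂ (Aop S π y) y : ℂ).re := by
  set T : ℝ := ((edgeSet S).card : ℝ) with hTdef
  have hT0 : (0:ℝ) < T := by rw [hTdef]; exact_mod_cast hT
  have h1 : ‖Aop S π y‖ ≤ (2/T) * ∑ s ∈ S, (deg S s:ℝ) * ‖π s y - y‖ := by
    unfold Aop d1star
    rw [norm_smul]
    have h2 : ‖(-(2 / ((edgeSet S).card : ℂ)))‖ = 2/T := by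
      rw [norm_neg, norm_div, hTdef]
      norm_num
    rw [h2]
    refine mul_le_mul_of_nonneg_left ?_ (by positivity)
    refine le_trans (norm_sum_le _ _) (le_of_eq ?_)
    refine Finset.sum_congr rfl fun s _ => ?_
    rw [norm_smul]
    simp
  have h2 : (∑ s ∈ S, (deg S s:ℝ) * ‖π s y - y‖)^2
      ≤ T * ∑ s ∈ S, (deg S s:ℝ)*‖π s y - y‖^2 := by
    have hcs := Finset.sum_mul_sq_le_sq_mul_sq S (fun s => Real.sqrt (deg S s))
      (fun s => Real.sqrt (deg S s) * ‖π s y - y‖)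
    have e1 : ∑ s ∈ S, Real.sqrt (deg S s) * (Real.sqrt (deg S s) * ‖π s y - y‖)
        = ∑ s ∈ S, (deg S s:ℝ) * ‖π s y - y‖ := by
      refine Finset.sum_congr rfl fun s _ => ?_
      rw [← mul_assoc, Real.mul_self_sqrt (by positivity)]
    have e2 : ∑ s ∈ S, (Real.sqrt (deg S s))^2 = T := by
      rw [hTdef, card_edge, Nat.cast_sum]
      refine Finset.sum_congr rfl fun s _ => ?_
      rw [Real.sq_sqrt (by positivity)]
    have e3 : ∑ s ∈ S, (Real.sqrt (deg S s) * ‖π s y - y‖)^2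
        = ∑ s ∈ S, (deg S s:ℝ)*‖π s y - y‖^2 := by
      refine Finset.sum_congr rfl fun s _ => ?_
      rw [mul_pow, Real.sq_sqrt (by positivity)]
    rw [e1, e2, e3] at hcs
    exact hcs
  rw [re_inner_Aop hπ hsym hT y, ← hTdef]
  have hA0 : (0:ℝ) ≤ ‖Aop S π y‖ := norm_nonneg _
  have hB0 : (0:ℝ) ≤ ∑ s ∈ S, (deg S s:ℝ) * ‖π s y - y‖ := by positivity
  calc ‖Aop S π y‖^2 ≤ ((2/T) * ∑ s ∈ S, (deg S s:ℝ) * ‖π s y - y‖)^2 := by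
        exact pow_le_pow_left₀ hA0 h1 2
    _ = (2/T)^2 * (∑ s ∈ S, (deg S s:ℝ) * ‖π s y - y‖)^2 := by ring
    _ ≤ (2/T)^2 * (T * ∑ s ∈ S, (deg S s:ℝ)*‖π s y - y‖^2) := by
        exact mul_le_mul_of_nonneg_left h2 (by positivity)
    _ = 4 * (T⁻¹ * ∑ s ∈ S, (deg S s:ℝ)*‖π s y - y‖^2) := by
        field_simp
        ring

lemma q_le_four (hπ : IsAlmostRep S ε π) (hsym : ∀ s ∈ S, s⁻¹ ∈ S)
    (hT : 0 < (edgeSet S).card) (y : H) :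
    (inner ℂ (Aop S π y) y : ℂ).re ≤ 4 * ‖y‖^2 := by
  set T : ℝ := ((edgeSet S).card : ℝ) with hTdef
  have hT0 : (0:ℝ) < T := by rw [hTdef]; exact_mod_cast hT
  rw [re_inner_Aop hπ hsym hT y]
  have h1 : ∑ s ∈ S, (deg S s : ℝ) * ‖π s y - y‖ ^ 2 ≤ T * (4*‖y‖^2) := by
    have h2 : ∀ s ∈ S, (deg S s : ℝ) * ‖π s y - y‖ ^ 2 ≤ (deg S s : ℝ) * (4*‖y‖^2) := by
      intro s hs
      refine mul_le_mul_of_nonneg_left ?_ (by positivity)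
      have h3 : ‖π s y - y‖ ≤ 2*‖y‖ := by
        have h4 := norm_sub_le (π s y) y
        rw [norm_pi hπ hs] at h4
        linarith
      nlinarith [norm_nonneg (π s y - y)]
    refine le_trans (Finset.sum_le_sum h2) (le_of_eq ?_)
    rw [← Finset.sum_mul]
    congr 1
    rw [hTdef, card_edge, Nat.cast_sum]
  calc T⁻¹ * ∑ s ∈ S, (deg S s : ℝ) * ‖π s y - y‖ ^ 2 ≤ T⁻¹ * (T * (4*‖y‖^2)) := by
        refine mul_le_mul_of_nonneg_left h1 (by positivity)
    _ = 4*‖y‖^2 := by field_simp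

lemma key_lt (hπ : IsAlmostRep S ε π) (hsym : ∀ s ∈ S, s⁻¹ ∈ S)
    {c : ℝ} {P : H →L[ℂ] H}
    (hkey : ∀ f : G → H, (∀ s ∈ S, f s⁻¹ = -(π s⁻¹ (f s))) →
      (∀ η : ℝ, 0 < η → ∃ u : H, P u = u ∧
        ∑ s ∈ S, (deg S s : ℝ) * ‖f s - (π s u - u)‖ ^ 2 < η) →
      (∃ s ∈ S, f s ≠ 0) →
      c * ∑ s ∈ S, (deg S s : ℝ) * ‖f s‖ ^ 2
        < ∑ s ∈ S, (deg S s : ℝ) *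
            (inner ℂ (π s (d1star S f) - d1star S f) (f s) : ℂ).re)
    (hT : 0 < (edgeSet S).card) (y : H) (hy : P y = y)
    (hne : ∃ s ∈ S, π s y - y ≠ 0) :
    c * (inner ℂ (Aop S π y) y : ℂ).re < ‖Aop S π y‖ ^ 2 := by
  set T : ℝ := ((edgeSet S).card : ℝ) with hTdef
  have hT0 : (0:ℝ) < T := by rw [hTdef]; exact_mod_cast hT
  have hTc : ((edgeSet S).card : ℂ) ≠ 0 := by
    exact_mod_cast Nat.cast_ne_zero.mpr hT.ne'
  have h1 := hkey (fun s => π s y - y)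
    (fun s hs => by
      show π s⁻¹ y - y = -(π s⁻¹ (π s y - y))
      rw [map_sub, pi_inv_app hπ hs]
      abel)
    (fun η hη => ⟨y, hy, by simpa using hη⟩) hne
  have hAopd : (d1star S fun s => (π s) y - y) = Aop S π y := rfl
  simp only [hAopd] at h1
  have hL : ∑ s ∈ S, (deg S s : ℝ) * ‖π s y - y‖ ^ 2
      = T * (inner ℂ (Aop S π y) y : ℂ).re := by
    rw [re_inner_Aop hπ hsym hT y, ← hTdef]
    field_simp
  have hsum : ∑ s ∈ S, (deg S s : ℂ) * ⟪π s (Aop S π y) - Aop S π y, π s y - y⟫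
      = ((edgeSet S).card : ℂ) * ⟪Aop S π (Aop S π y), y⟫ := by
    rw [inner_Aop hπ hsym hTc (Aop S π y) y]
    field_simp
  have hAA : ⟪Aop S π (Aop S π y), y⟫ = (starRingEnd ℂ) ⟪Aop S π y, Aop S π y⟫ :=
    inner_Aop_symm hπ hsym hTc y (Aop S π y)
  have hRHS : ∑ s ∈ S, (deg S s : ℝ) *
      (inner ℂ (π s (Aop S π y) - Aop S π y) (π s y - y) : ℂ).re
      = T * ‖Aop S π y‖ ^ 2 := by
    have e1 : ∑ s ∈ S, (deg S s : ℝ) *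
        (inner ℂ (π s (Aop S π y) - Aop S π y) (π s y - y) : ℂ).re
        = (∑ s ∈ S, (deg S s : ℂ) * ⟪π s (Aop S π y) - Aop S π y, π s y - y⟫).re := by
      rw [Complex.re_sum]
      refine Finset.sum_congr rfl fun s _ => ?_
      rw [show ((deg S s : ℂ)) = (((deg S s : ℝ) : ℝ) : ℂ) from (Complex.ofReal_natCast _).symm,
        Complex.re_ofReal_mul]
    rw [e1, hsum, hAA]
    rw [show ((edgeSet S).card : ℂ) = ((T : ℝ) : ℂ) by rw [hTdef, Complex.ofReal_natCast]]
    rw [Complex.re_ofReal_mul, Complex.conj_re]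
    congr 1
    simpa using (@inner_self_eq_norm_sq ℂ _ _ _ _ (Aop S π y))
  rw [hL, hRHS] at h1
  have h2 : T * (c * (inner ℂ (Aop S π y) y : ℂ).re) < T * ‖Aop S π y‖ ^ 2 := by
    ring_nf
    ring_nf at h1
    linarith
  exact lt_of_mul_lt_mul_left h2 hT0.le

lemma key_le (hπ : IsAlmostRep S ε π) (hsym : ∀ s ∈ S, s⁻¹ ∈ S)
    {c : ℝ} {P : H →L[ℂ] H} (hc : 0 < c)
    (hkey : ∀ f : G → H, (∀ s ∈ S, f s⁻¹ = -(π s⁻¹ (f s))) →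
      (∀ η : ℝ, 0 < η → ∃ u : H, P u = u ∧
        ∑ s ∈ S, (deg S s : ℝ) * ‖f s - (π s u - u)‖ ^ 2 < η) →
      (∃ s ∈ S, f s ≠ 0) →
      c * ∑ s ∈ S, (deg S s : ℝ) * ‖f s‖ ^ 2
        < ∑ s ∈ S, (deg S s : ℝ) *
            (inner ℂ (π s (d1star S f) - d1star S f) (f s) : ℂ).re)
    (hT : 0 < (edgeSet S).card) (y : H) (hy : P y = y) :
    c * (inner ℂ (Aop S π y) y : ℂ).re ≤ ‖Aop S π y‖ ^ 2 := by
  by_cases hne : ∃ s ∈ S, π s y - y ≠ 0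
  · exact (key_lt hπ hsym hkey hT y hy hne).le
  · push_neg at hne
    have hA : Aop S π y = 0 := by
      unfold Aop d1star
      rw [Finset.sum_eq_zero fun s hs => by
        show (deg S s : ℂ) • (π s y - y) = 0
        rw [hne s hs, smul_zero], smul_zero]
    rw [hA]
    simp

lemma deg_eq_zero_of_card (hT : (edgeSet S).card = 0) {s : G} (hs : s ∈ S) :
    deg S s = 0 := by
  have h := card_edge S
  rw [hT] at h
  exact Finset.sum_eq_zero_iff.mp h.symm s hs

lemma two_le_deg (hone : (1:G) ∉ S) {t : G} (ht : t ∈ S) (htinv : t⁻¹ = t)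
    (h1 : deg S t ≠ 0) : 2 ≤ deg S t := by
  unfold deg at h1 ⊢
  obtain ⟨a, ha⟩ := Finset.card_pos.mp (Nat.pos_of_ne_zero h1)
  have ha' := Finset.mem_filter.mp ha
  have htt : t * t = 1 := by
    have : t⁻¹ * t = 1 := inv_mul_cancel t
    rwa [htinv] at this
  have hta : t * a ∈ S.filter (fun s' => t⁻¹ * s' ∈ S) := by
    rw [Finset.mem_filter]
    constructor
    · have := ha'.2
      rwa [htinv] at this
    · rw [htinv, ← mul_assoc, htt, one_mul]
      exact ha'.1
  have hne : t * a ≠ a := by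
    intro h
    have h2 : t * a = 1 * a := by rw [h, one_mul]
    have : t = 1 := mul_right_cancel h2
    exact hone (this ▸ ht)
  exact Finset.one_lt_card.mpr ⟨a, ha, t * a, hta, hne.symm⟩

lemma step0a (hπ : IsAlmostRep S ε π) (hsym : ∀ s ∈ S, s⁻¹ ∈ S)
    {c : ℝ} {P : H →L[ℂ] H}
    (hkey : ∀ f : G → H, (∀ s ∈ S, f s⁻¹ = -(π s⁻¹ (f s))) →
      (∀ η : ℝ, 0 < η → ∃ u : H, P u = u ∧
        ∑ s ∈ S, (deg S s : ℝ) * ‖f s - (π s u - u)‖ ^ 2 < η) →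
      (∃ s ∈ S, f s ≠ 0) →
      c * ∑ s ∈ S, (deg S s : ℝ) * ‖f s‖ ^ 2
        < ∑ s ∈ S, (deg S s : ℝ) *
            (inner ℂ (π s (d1star S f) - d1star S f) (f s) : ℂ).re)
    {t : G} (ht : t ∈ S) (ht0 : deg S t = 0) (htinv : t⁻¹ ≠ t) (ξ : H) : ξ = 0 := by
  by_contra hξ
  set f : G → H := fun g => if g = t then ξ else if g = t⁻¹ then -(π t⁻¹ ξ) else 0 with hf
  have hft : f t = ξ := by rw [hf]; simp
  have hfti : f t⁻¹ = -(π t⁻¹ ξ) := by rw [hf]; simp [htinv]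
  have hfz : ∀ g, g ≠ t → g ≠ t⁻¹ → f g = 0 := by
    intro g h1 h2; rw [hf]; simp [h1, h2]
  have hcase : ∀ s ∈ S, deg S s = 0 ∨ f s = 0 := by
    intro s hs
    by_cases h1 : s = t
    · subst h1; exact Or.inl ht0
    by_cases h2 : s = t⁻¹
    · subst h2; exact Or.inl (by rw [deg_inv]; exact ht0)
    · exact Or.inr (hfz s h1 h2)
  have hd1 : d1star S f = 0 := by
    unfold d1star
    rw [Finset.sum_eq_zero fun s hs => ?_, smul_zero]
    rcases hcase s hs with h | h
    · rw [h]; simp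
    · rw [h, smul_zero]
  have hsym1 : ∀ s ∈ S, f s⁻¹ = -(π s⁻¹ (f s)) := by
    intro s hs
    by_cases h1 : s = t
    · subst h1; rw [hft, hfti]
    by_cases h2 : s = t⁻¹
    · subst h2
      rw [inv_inv, hft, hfti, map_neg, pi_app_inv hπ ht, neg_neg]
    · have h3 : s⁻¹ ≠ t := fun h => h2 (by rw [← h, inv_inv])
      have h4 : s⁻¹ ≠ t⁻¹ := fun h => h1 (by
        have := congrArg (·⁻¹) h
        simpa using this)
      rw [hfz s h1 h2, hfz s⁻¹ h3 h4, map_zero, neg_zero]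
  have happrox : ∀ η : ℝ, 0 < η → ∃ u : H, P u = u ∧
      ∑ s ∈ S, (deg S s : ℝ) * ‖f s - (π s u - u)‖ ^ 2 < η := by
    intro η hη
    refine ⟨0, map_zero P, ?_⟩
    rw [Finset.sum_eq_zero fun s hs => ?_]
    · exact hη
    rcases hcase s hs with h | h
    · rw [h]; simp
    · rw [h]; simp
  have h1 := hkey f hsym1 happrox ⟨t, ht, by rw [hft]; exact hξ⟩
  have hz1 : ∑ s ∈ S, (deg S s : ℝ) * ‖f s‖ ^ 2 = 0 := by
    refine Finset.sum_eq_zero fun s hs => ?_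
    rcases hcase s hs with h | h
    · rw [h]; simp
    · rw [h]; simp
  have hz2 : ∑ s ∈ S, (deg S s : ℝ) *
      (inner ℂ (π s (d1star S f) - d1star S f) (f s) : ℂ).re = 0 := by
    refine Finset.sum_eq_zero fun s hs => ?_
    rw [hd1, map_zero, sub_zero, inner_zero_left]
    simp
  rw [hz1, hz2] at h1
  simp at h1

lemma step0b (hπ : IsAlmostRep S ε π) (hsym : ∀ s ∈ S, s⁻¹ ∈ S)
    {c : ℝ} {P : H →L[ℂ] H}
    (hkey : ∀ f : G → H, (∀ s ∈ S, f s⁻¹ = -(π s⁻¹ (f s))) →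
      (∀ η : ℝ, 0 < η → ∃ u : H, P u = u ∧
        ∑ s ∈ S, (deg S s : ℝ) * ‖f s - (π s u - u)‖ ^ 2 < η) →
      (∃ s ∈ S, f s ≠ 0) →
      c * ∑ s ∈ S, (deg S s : ℝ) * ‖f s‖ ^ 2
        < ∑ s ∈ S, (deg S s : ℝ) *
            (inner ℂ (π s (d1star S f) - d1star S f) (f s) : ℂ).re)
    {t : G} (ht : t ∈ S) (ht0 : deg S t = 0) (htinv : t⁻¹ = t) (ξ : H) :
    π t ξ = ξ := by
  by_contra hne
  have hξ : ξ - π t ξ ≠ 0 := fun h => hne (by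
    have := sub_eq_zero.mp h
    exact this.symm)
  have hsq : ∀ v : H, π t (π t v) = v := by
    intro v
    have := pi_app_inv hπ ht v
    rwa [htinv] at this
  set f : G → H := fun g => if g = t then ξ - π t ξ else 0 with hf
  have hft : f t = ξ - π t ξ := by rw [hf]; simp
  have hfz : ∀ g, g ≠ t → f g = 0 := by intro g h1; rw [hf]; simp [h1]
  have hcase : ∀ s ∈ S, deg S s = 0 ∨ f s = 0 := by
    intro s hs
    by_cases h1 : s = t
    · subst h1; exact Or.inl ht0
    · exact Or.inr (hfz s h1)
  have hd1 : d1star S f = 0 := by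
    unfold d1star
    rw [Finset.sum_eq_zero fun s hs => ?_, smul_zero]
    rcases hcase s hs with h | h
    · rw [h]; simp
    · rw [h, smul_zero]
  have hsym1 : ∀ s ∈ S, f s⁻¹ = -(π s⁻¹ (f s)) := by
    intro s hs
    by_cases h1 : s = t
    · subst h1
      rw [htinv, hft, map_sub, hsq]
      abel
    · have h3 : s⁻¹ ≠ t := fun h => h1 (by rw [← htinv, ← h, inv_inv])
      rw [hfz s h1, hfz s⁻¹ h3, map_zero, neg_zero]
  have happrox : ∀ η : ℝ, 0 < η → ∃ u : H, P u = u ∧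
      ∑ s ∈ S, (deg S s : ℝ) * ‖f s - (π s u - u)‖ ^ 2 < η := by
    intro η hη
    refine ⟨0, map_zero P, ?_⟩
    rw [Finset.sum_eq_zero fun s hs => ?_]
    · exact hη
    rcases hcase s hs with h | h
    · rw [h]; simp
    · rw [h]; simp
  have h1 := hkey f hsym1 happrox ⟨t, ht, by rw [hft]; exact hξ⟩
  have hz1 : ∑ s ∈ S, (deg S s : ℝ) * ‖f s‖ ^ 2 = 0 := by
    refine Finset.sum_eq_zero fun s hs => ?_
    rcases hcase s hs with h | h
    · rw [h]; simp
    · rw [h]; simp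
  have hz2 : ∑ s ∈ S, (deg S s : ℝ) *
      (inner ℂ (π s (d1star S f) - d1star S f) (f s) : ℂ).re = 0 := by
    refine Finset.sum_eq_zero fun s hs => ?_
    rw [hd1, map_zero, sub_zero, inner_zero_left]
    simp
  rw [hz1, hz2] at h1
  simp at h1

set_option maxHeartbeats 1000000 in
lemma q_lower_bound (hπ : IsAlmostRep S ε π) (hsym : ∀ s ∈ S, s⁻¹ ∈ S)
    {c δ : ℝ} {P : H →L[ℂ] H} (hc : 0 < c) (hδ : 0 < δ)
    (hPcomm : ∀ u : H,
      P (d1star S (fun s => π s u - u)) = d1star S (fun s => π s (P u) - P u))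
    (hPhigh : ∀ u : H, (δ ^ 2 / ((edgeSet S).card : ℝ)) * ‖P u‖ ^ 2
      ≤ (inner ℂ (d1star S (fun s => π s (P u) - P u)) (P u) : ℂ).re)
    (hkey : ∀ f : G → H, (∀ s ∈ S, f s⁻¹ = -(π s⁻¹ (f s))) →
      (∀ η : ℝ, 0 < η → ∃ u : H, P u = u ∧
        ∑ s ∈ S, (deg S s : ℝ) * ‖f s - (π s u - u)‖ ^ 2 < η) →
      (∃ s ∈ S, f s ≠ 0) →
      c * ∑ s ∈ S, (deg S s : ℝ) * ‖f s‖ ^ 2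
        < ∑ s ∈ S, (deg S s : ℝ) *
            (inner ℂ (π s (d1star S f) - d1star S f) (f s) : ℂ).re)
    (hT : 0 < (edgeSet S).card) (u : H) (hu : P u = u) :
    c * ‖u‖ ^ 2 ≤ (inner ℂ (Aop S π u) u : ℂ).re := by
  rcases eq_or_ne u 0 with rfl | hu0
  · simp
  have hT0 : (0:ℝ) < ((edgeSet S).card : ℝ) := by exact_mod_cast hT
  have hTc : ((edgeSet S).card : ℂ) ≠ 0 := by
    exact_mod_cast Nat.cast_ne_zero.mpr hT.ne'
  have hlam : 0 < δ ^ 2 / ((edgeSet S).card : ℝ) := by positivity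
  -- range P is Aop-invariant
  have hKA : ∀ y : H, P y = y → P (Aop S π y) = Aop S π y := by
    intro y hy
    have h := hPcomm y
    rw [hy] at h
    exact h
  -- lower bound on the form on range P
  have hqlam : ∀ y : H, P y = y →
      δ ^ 2 / ((edgeSet S).card : ℝ) * ‖y‖ ^ 2 ≤ (inner ℂ (Aop S π y) y : ℂ).re := by
    intro y hy
    have h := hPhigh y
    rw [hy] at h
    exact h
  -- the set of values on unit vectors in range P
  set M : Set ℝ := {r : ℝ | ∃ y : H, P y = y ∧ ‖y‖ = 1 ∧ (inner ℂ (Aop S π y) y : ℂ).re = r}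
    with hM
  have hnu : ‖u‖ ≠ 0 := norm_ne_zero_iff.mpr hu0
  have hMne : M.Nonempty := by
    refine ⟨_, ⟨(‖u‖:ℂ)⁻¹ • u, ?_, ?_, rfl⟩⟩
    · rw [map_smul, hu]
    · rw [norm_smul, norm_inv, Complex.norm_real, Real.norm_eq_abs,
        abs_of_nonneg (norm_nonneg u)]
      field_simp
  have hMlb : ∀ r ∈ M, δ ^ 2 / ((edgeSet S).card : ℝ) ≤ r := by
    rintro r ⟨y, hyP, hy1, rfl⟩
    have h := hqlam y hyP
    rw [hy1] at h
    simpa using h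
  have hbdd : BddBelow M := ⟨_, hMlb⟩
  have hlm : δ ^ 2 / ((edgeSet S).card : ℝ) ≤ sInf M := le_csInf hMne hMlb
  set m : ℝ := sInf M with hmdef
  have hm0 : 0 < m := lt_of_lt_of_le hlam hlm
  have hm_le : ∀ y : H, P y = y → m * ‖y‖ ^ 2 ≤ (inner ℂ (Aop S π y) y : ℂ).re := by
    intro y hyP
    rcases eq_or_ne y 0 with rfl | hy0
    · simp
    have hyn : ‖y‖ ≠ 0 := norm_ne_zero_iff.mpr hy0
    have hsqpos : (0:ℝ) < ‖y‖ ^ 2 := by positivity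
    have hmem : ((inner ℂ (Aop S π ((‖y‖:ℂ)⁻¹ • y)) ((‖y‖:ℂ)⁻¹ • y) : ℂ).re) ∈ M := by
      refine ⟨(‖y‖:ℂ)⁻¹ • y, by rw [map_smul, hyP], ?_, rfl⟩
      rw [norm_smul, norm_inv, Complex.norm_real, Real.norm_eq_abs,
        abs_of_nonneg (norm_nonneg y)]
      field_simp
    have h1 : m ≤ (inner ℂ (Aop S π ((‖y‖:ℂ)⁻¹ • y)) ((‖y‖:ℂ)⁻¹ • y) : ℂ).re :=
      csInf_le hbdd hmem
    have h2 : (inner ℂ (Aop S π ((‖y‖:ℂ)⁻¹ • y)) ((‖y‖:ℂ)⁻¹ • y) : ℂ).re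
        = (‖y‖ ^ 2)⁻¹ * (inner ℂ (Aop S π y) y : ℂ).re := by
      rw [Aop_smul, inner_smul_left, inner_smul_right, map_inv₀, Complex.conj_ofReal]
      rw [show ((‖y‖:ℂ))⁻¹ * (((‖y‖:ℂ))⁻¹ * ⟪Aop S π y, y⟫)
          = ((((‖y‖ ^ 2)⁻¹ : ℝ)) : ℂ) * ⟪Aop S π y, y⟫ by
        push_cast
        field_simp]
      rw [Complex.re_ofReal_mul]
    rw [h2] at h1
    have h3 := mul_le_mul_of_nonneg_right h1 hsqpos.le
    calc m * ‖y‖ ^ 2 ≤ (‖y‖ ^ 2)⁻¹ * (inner ℂ (Aop S π y) y : ℂ).re * ‖y‖ ^ 2 := h3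
      _ = (inner ℂ (Aop S π y) y : ℂ).re := by field_simp
  -- main claim : c ≤ m
  have hcm : c ≤ m := by
    by_contra hcm
    push_neg at hcm
    have key : ∀ θ : ℝ, 0 < θ → c * m ≤ (m + 2 * Real.sqrt θ) ^ 2 := by
      intro θ hθ
      obtain ⟨r, hrM, hrlt⟩ := exists_lt_of_csInf_lt hMne
        (show sInf M < m + θ by rw [← hmdef]; linarith)
      obtain ⟨y, hyP, hy1, rfl⟩ := hrM
      set z : H := Aop S π y - (m:ℂ) • y with hz
      have hzP : P z = z := by rw [hz, map_sub, map_smul, hKA y hyP, hyP]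
      have hyq : m ≤ (inner ℂ (Aop S π y) y : ℂ).re := csInf_le hbdd ⟨y, hyP, hy1, rfl⟩
      have hzz : (inner ℂ z z : ℂ) = inner ℂ (Aop S π y) z - (m:ℂ) * inner ℂ y z := by
        conv_lhs => rw [hz]
        rw [inner_sub_left, inner_smul_left, Complex.conj_ofReal]
      have hbz : (inner ℂ (Aop S π y) z : ℂ).re - m * (inner ℂ y z : ℂ).re = ‖z‖ ^ 2 := by
        calc (inner ℂ (Aop S π y) z : ℂ).re - m * (inner ℂ y z : ℂ).re
            = ((inner ℂ (Aop S π y) z : ℂ) - (m:ℂ) * (inner ℂ y z : ℂ)).re := by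
              rw [Complex.sub_re, Complex.re_ofReal_mul]
          _ = (inner ℂ z z : ℂ).re := by rw [← hzz]
          _ = ‖z‖ ^ 2 := by simpa using (@inner_self_eq_norm_sq ℂ _ _ _ _ z)
      have hquad : ∀ t : ℝ, 0 ≤ ((inner ℂ (Aop S π z) z : ℂ).re - m * ‖z‖ ^ 2) * (t * t)
          + (-(2 * ‖z‖ ^ 2)) * t + ((inner ℂ (Aop S π y) y : ℂ).re - m) := by
        intro t
        have h1 : P (y - (t:ℂ) • z) = y - (t:ℂ) • z := by
          rw [map_sub, map_smul, hyP, hzP]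
        have h2 := hm_le _ h1
        rw [q_expand hπ hsym hTc y z t, norm_expand y z t, hy1] at h2
        have hbzt : ((inner ℂ (Aop S π y) z : ℂ).re - m * (inner ℂ y z : ℂ).re) * t
            = ‖z‖ ^ 2 * t := by rw [hbz]
        nlinarith [h2, hbzt]
      have hdisc := discrim_le_zero hquad
      rw [discrim] at hdisc
      have hc0 : (inner ℂ (Aop S π y) y : ℂ).re - m < θ := by linarith
      have hc0' : 0 ≤ (inner ℂ (Aop S π y) y : ℂ).re - m := by linarith
      have hqz4 := q_le_four hπ hsym hT z
      have ha4 : (inner ℂ (Aop S π z) z : ℂ).re - m * ‖z‖ ^ 2 ≤ 4 * ‖z‖ ^ 2 := by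
        nlinarith [sq_nonneg ‖z‖, hm0.le]
      have ha0 : 0 ≤ (inner ℂ (Aop S π z) z : ℂ).re - m * ‖z‖ ^ 2 := by
        have := hm_le z hzP; linarith
      have hz4 : ‖z‖ ^ 2 ≤ 4 * θ := by
        rcases eq_or_lt_of_le (sq_nonneg ‖z‖) with h | hzpos
        · rw [← h]; positivity
        · nlinarith [hdisc, hc0, hc0', ha4, ha0, hzpos]
      have hzle : ‖z‖ ≤ 2 * Real.sqrt θ := by
        have h6 : ‖z‖ = Real.sqrt (‖z‖ ^ 2) := (Real.sqrt_sq (norm_nonneg z)).symm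
        rw [h6]
        calc Real.sqrt (‖z‖ ^ 2) ≤ Real.sqrt (4 * θ) := Real.sqrt_le_sqrt hz4
          _ = 2 * Real.sqrt θ := by
            rw [show (4:ℝ) * θ = (2:ℝ) ^ 2 * θ by norm_num,
              Real.sqrt_mul (by positivity), Real.sqrt_sq (by norm_num)]
      have hAyle : ‖Aop S π y‖ ≤ m + 2 * Real.sqrt θ := by
        have h5 : Aop S π y = z + (m:ℂ) • y := by rw [hz]; abel
        calc ‖Aop S π y‖ = ‖z + (m:ℂ) • y‖ := by rw [← h5]
          _ ≤ ‖z‖ + ‖(m:ℂ) • y‖ := norm_add_le _ _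
          _ = ‖z‖ + m := by
              rw [norm_smul, hy1, mul_one, Complex.norm_real, Real.norm_eq_abs,
                abs_of_pos hm0]
          _ ≤ 2 * Real.sqrt θ + m := by linarith
          _ = m + 2 * Real.sqrt θ := by ring
      have h7 := key_le hπ hsym hc hkey hT y hyP
      have h8 : c * m ≤ c * (inner ℂ (Aop S π y) y : ℂ).re :=
        mul_le_mul_of_nonneg_left hyq hc.le
      calc c * m ≤ c * (inner ℂ (Aop S π y) y : ℂ).re := h8
        _ ≤ ‖Aop S π y‖ ^ 2 := h7
        _ ≤ (m + 2 * Real.sqrt θ) ^ 2 := by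
            nlinarith [norm_nonneg (Aop S π y), hAyle, hm0.le, Real.sqrt_nonneg θ]
    have h9 : c * m ≤ m ^ 2 := by
      by_contra h9
      push_neg at h9
      have hd0 : 0 < c * m - m ^ 2 := by linarith
      set d : ℝ := c * m - m ^ 2 with hd
      set sθ : ℝ := min 1 (d / (8 * m + 8)) with hsθ
      have hs0 : 0 < sθ := by
        apply lt_min
        · norm_num
        · positivity
      have h10 := key (sθ ^ 2) (by positivity)
      rw [Real.sqrt_sq hs0.le] at h10
      have hs1 : sθ ≤ 1 := min_le_left _ _
      have hs2 : sθ ≤ d / (8 * m + 8) := min_le_right _ _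
      have hs3 : sθ ^ 2 ≤ sθ := by nlinarith
      have hden : (0:ℝ) < 8 * m + 8 := by linarith
      have h11 : (4 * m + 4) * sθ ≤ d / 2 := by
        calc (4 * m + 4) * sθ ≤ (4 * m + 4) * (d / (8 * m + 8)) := by
              apply mul_le_mul_of_nonneg_left hs2 (by linarith)
          _ = d / 2 := by field_simp; ring
      nlinarith [h10, hs3, hm0.le, hs0.le]
    nlinarith [hm0]
  have h12 := hm_le u hu
  nlinarith [hcm, sq_nonneg ‖u‖]

end SP

end SPAux

set_option maxHeartbeats 1000000 in
/-- The dichotomy of Proposition 2.6: if `⟨d₁d₁*f, f⟩_{C¹} > c⟨f,f⟩_{C¹}` for every nonzero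
`f ∈ B¹(δ²/|T|)` (with `0 < δ < c/2`), then either there is a nonzero `δ`-almost-invariant
vector, or every vector satisfies `max_{s∈S} ‖π(s)u − u‖ ≥ (c/2)‖u‖`. -/
theorem stmt15 {G : Type*} [Group G] [DecidableEq G]
    {H : Type*} [NormedAddCommGroup H] [InnerProductSpace ℂ H] [CompleteSpace H]
    (S : Finset G) (hS : S.Nonempty) (hsym : ∀ s ∈ S, s⁻¹ ∈ S) (hone : (1 : G) ∉ S)
    (ε : ℝ) (hε : 0 ≤ ε) (π : G → H →L[ℂ] H) (hπ : IsAlmostRep S ε π)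
    (c δ : ℝ) (hc : 0 < c) (hδ : 0 < δ) (hδc : δ < c / 2)
    (P : H →L[ℂ] H) (hPidem : P.comp P = P) (hPsa : IsSelfAdjoint P)
    (hPcomm : ∀ u : H,
      P (d1star S (fun s => π s u - u)) = d1star S (fun s => π s (P u) - P u))
    (hPhigh : ∀ u : H, (δ ^ 2 / ((edgeSet S).card : ℝ)) * ‖P u‖ ^ 2
      ≤ (inner ℂ (d1star S (fun s => π s (P u) - P u)) (P u) : ℂ).re)
    (hPlow : ∀ u : H,
      (inner ℂ (d1star S (fun s => π s (u - P u) - (u - P u))) (u - P u) : ℂ).re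
        ≤ (δ ^ 2 / ((edgeSet S).card : ℝ)) * ‖u - P u‖ ^ 2)
    (hkey : ∀ f : G → H, (∀ s ∈ S, f s⁻¹ = -(π s⁻¹ (f s))) →
      (∀ η : ℝ, 0 < η → ∃ u : H, P u = u ∧
        ∑ s ∈ S, (deg S s : ℝ) * ‖f s - (π s u - u)‖ ^ 2 < η) →
      (∃ s ∈ S, f s ≠ 0) →
      c * ∑ s ∈ S, (deg S s : ℝ) * ‖f s‖ ^ 2
        < ∑ s ∈ S, (deg S s : ℝ) *
            (inner ℂ (π s (d1star S f) - d1star S f) (f s) : ℂ).re) :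
    (∃ u : H, u ≠ 0 ∧ ∀ s ∈ S, ‖π s u - u‖ < δ * ‖u‖) ∨
    (∀ u : H, ∃ s ∈ S, (c / 2) * ‖u‖ ≤ ‖π s u - u‖) := by
  by_cases hfirst : ∃ u : H, u ≠ 0 ∧ ∀ s ∈ S, ‖π s u - u‖ < δ * ‖u‖
  · exact Or.inl hfirst
  right
  push_neg at hfirst
  intro u
  by_contra hsec
  push_neg at hsec
  obtain ⟨s₁, hs₁⟩ := hS
  have hu0 : u ≠ 0 := by
    intro h
    have h2 := hsec s₁ hs₁
    rw [h] at h2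
    simp at h2
  have hnu : 0 < ‖u‖ := norm_pos_iff.mpr hu0
  by_cases h0a : ∃ t ∈ S, deg S t = 0 ∧ t⁻¹ ≠ t
  · obtain ⟨t, ht, ht0, htinv⟩ := h0a
    exact hu0 (SP.step0a hπ hsym hkey ht ht0 htinv u)
  push_neg at h0a
  rcases Nat.eq_zero_or_pos (edgeSet S).card with hT0 | hT
  · obtain ⟨s₀, hs₀S, hs₀⟩ := hfirst u hu0
    have hd0 := SP.deg_eq_zero_of_card hT0 hs₀S
    have h1 : π s₀ u = u :=
      SP.step0b hπ hsym hkey hs₀S hd0 (h0a s₀ hs₀S hd0) u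
    rw [h1, sub_self, norm_zero] at hs₀
    nlinarith [hδ, hnu]
  have hT0 : (0:ℝ) < ((edgeSet S).card : ℝ) := by exact_mod_cast hT
  set x : H := u - P u with hx
  have hxlow : ∑ s ∈ S, (deg S s : ℝ) * ‖π s x - x‖ ^ 2 ≤ δ ^ 2 * ‖x‖ ^ 2 := by
    have h2 : (inner ℂ (SP.Aop S π x) x : ℂ).re
        ≤ δ ^ 2 / ((edgeSet S).card : ℝ) * ‖x‖ ^ 2 := hPlow u
    rw [SP.re_inner_Aop hπ hsym hT x] at h2
    have h4 := mul_le_mul_of_nonneg_left h2 hT0.le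
    calc ∑ s ∈ S, (deg S s : ℝ) * ‖π s x - x‖ ^ 2
        = ((edgeSet S).card : ℝ) * ((((edgeSet S).card : ℝ))⁻¹
            * ∑ s ∈ S, (deg S s : ℝ) * ‖π s x - x‖ ^ 2) := by
          field_simp
      _ ≤ ((edgeSet S).card : ℝ) * (δ ^ 2 / ((edgeSet S).card : ℝ) * ‖x‖ ^ 2) := h4
      _ = δ ^ 2 * ‖x‖ ^ 2 := by field_simp
  have hx0 : x = 0 := by
    by_contra hxne
    have hnx : 0 < ‖x‖ := norm_pos_iff.mpr hxne
    obtain ⟨s₀, hs₀S, hs₀⟩ := hfirst x hxne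
    have hsq : δ ^ 2 * ‖x‖ ^ 2 ≤ ‖π s₀ x - x‖ ^ 2 := by
      have h := mul_le_mul hs₀ hs₀ (by positivity) (norm_nonneg _)
      nlinarith [h]
    by_cases hdeg : deg S s₀ = 0
    · have hinv := h0a s₀ hs₀S hdeg
      have h5 := SP.step0b hπ hsym hkey hs₀S hdeg hinv x
      rw [h5, sub_self, norm_zero] at hs₀
      nlinarith [hδ, hnx]
    · have hkey2 : 2 * ‖π s₀ x - x‖ ^ 2 ≤ ∑ s ∈ S, (deg S s : ℝ) * ‖π s x - x‖ ^ 2 := by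
        by_cases hinv : s₀⁻¹ = s₀
        · have h2d : 2 ≤ deg S s₀ := SP.two_le_deg hone hs₀S hinv hdeg
          have h2d' : (2:ℝ) ≤ (deg S s₀ : ℝ) := by exact_mod_cast h2d
          have hterm : 2 * ‖π s₀ x - x‖ ^ 2 ≤ (deg S s₀ : ℝ) * ‖π s₀ x - x‖ ^ 2 := by
            nlinarith [sq_nonneg ‖π s₀ x - x‖]
          refine le_trans hterm ?_
          exact Finset.single_le_sum (f := fun s => (deg S s : ℝ) * ‖π s x - x‖ ^ 2)
            (fun s _ => by positivity) hs₀S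
        · have hs₀invS : s₀⁻¹ ∈ S := hsym s₀ hs₀S
          have hpair : ({s₀, s₀⁻¹} : Finset G) ⊆ S := by
            intro g hg
            rcases Finset.mem_insert.mp hg with rfl | hg
            · exact hs₀S
            · rw [Finset.mem_singleton.mp hg]; exact hs₀invS
          have hsum_pair : ∑ s ∈ ({s₀, s₀⁻¹} : Finset G), (deg S s : ℝ) * ‖π s x - x‖ ^ 2
              = 2 * ((deg S s₀ : ℝ) * ‖π s₀ x - x‖ ^ 2) := by
            rw [Finset.sum_pair (fun h => hinv h.symm)]
            rw [SP.deg_inv, SP.norm_d1_inv hπ hsym hs₀S x]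
            ring
          have hle : ∑ s ∈ ({s₀, s₀⁻¹} : Finset G), (deg S s : ℝ) * ‖π s x - x‖ ^ 2
              ≤ ∑ s ∈ S, (deg S s : ℝ) * ‖π s x - x‖ ^ 2 :=
            Finset.sum_le_sum_of_subset_of_nonneg hpair (fun s _ _ => by positivity)
          rw [hsum_pair] at hle
          have h1d : (1:ℝ) ≤ (deg S s₀ : ℝ) := by
            exact_mod_cast Nat.one_le_iff_ne_zero.mpr hdeg
          nlinarith [sq_nonneg ‖π s₀ x - x‖]
      nlinarith [hxlow, hsq, hkey2, mul_pos (pow_pos hδ 2) (pow_pos hnx 2)]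
  have hPu : P u = u := by
    have h6 : u - P u = 0 := by rw [← hx]; exact hx0
    exact (sub_eq_zero.mp h6).symm
  have hq_ge : c * ‖u‖ ^ 2 ≤ (inner ℂ (SP.Aop S π u) u : ℂ).re :=
    SP.q_lower_bound hπ hsym hc hδ hPcomm hPhigh hkey hT u hPu
  have hqpos : 0 < (inner ℂ (SP.Aop S π u) u : ℂ).re :=
    lt_of_lt_of_le (mul_pos hc (pow_pos hnu 2)) hq_ge
  have hq_up : (inner ℂ (SP.Aop S π u) u : ℂ).re < c ^ 2 / 4 * ‖u‖ ^ 2 := by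
    rw [SP.re_inner_Aop hπ hsym hT u]
    obtain ⟨s₂, hs₂S, hs₂d⟩ : ∃ s ∈ S, deg S s ≠ 0 := by
      by_contra hall
      push_neg at hall
      have h7 : (edgeSet S).card = 0 := by
        rw [SP.card_edge]; exact Finset.sum_eq_zero hall
      omega
    have hstrict : ∑ s ∈ S, (deg S s : ℝ) * ‖π s u - u‖ ^ 2
        < ∑ s ∈ S, (deg S s : ℝ) * (c / 2 * ‖u‖) ^ 2 := by
      apply Finset.sum_lt_sum
      · intro s hs
        have h8 := hsec s hs
        have h9 : ‖π s u - u‖ ^ 2 ≤ (c / 2 * ‖u‖) ^ 2 := by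
          nlinarith [norm_nonneg (π s u - u)]
        exact mul_le_mul_of_nonneg_left h9 (Nat.cast_nonneg _)
      · refine ⟨s₂, hs₂S, ?_⟩
        have hd1 : (1:ℝ) ≤ (deg S s₂ : ℝ) := by
          exact_mod_cast Nat.one_le_iff_ne_zero.mpr hs₂d
        have h8 := hsec s₂ hs₂S
        have h9 : ‖π s₂ u - u‖ ^ 2 < (c / 2 * ‖u‖) ^ 2 := by
          nlinarith [norm_nonneg (π s₂ u - u), hc, hnu]
        nlinarith [sq_nonneg ‖π s₂ u - u‖]
    have hconst : ∑ s ∈ S, (deg S s : ℝ) * (c / 2 * ‖u‖) ^ 2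
        = ((edgeSet S).card : ℝ) * (c / 2 * ‖u‖) ^ 2 := by
      rw [← Finset.sum_mul]
      congr 1
      rw [SP.card_edge, Nat.cast_sum]
    calc (((edgeSet S).card : ℝ))⁻¹ * ∑ s ∈ S, (deg S s : ℝ) * ‖π s u - u‖ ^ 2
        < (((edgeSet S).card : ℝ))⁻¹ * (((edgeSet S).card : ℝ) * (c / 2 * ‖u‖) ^ 2) := by
          apply mul_lt_mul_of_pos_left _ (inv_pos.mpr hT0)
          rw [← hconst]
          exact hstrict
      _ = c ^ 2 / 4 * ‖u‖ ^ 2 := by field_simp; ring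
  have hc4a : 4 < c := by nlinarith [hq_ge, hq_up, pow_pos hnu 2]
  have hne : ∃ s ∈ S, π s u - u ≠ 0 := by
    by_contra hall
    push_neg at hall
    have h10 : (inner ℂ (SP.Aop S π u) u : ℂ).re = 0 := by
      rw [SP.re_inner_Aop hπ hsym hT u]
      rw [Finset.sum_eq_zero fun s hs => by rw [hall s hs, norm_zero]; ring]
      ring
    linarith [hqpos]
  have hlt := SP.key_lt hπ hsym hkey hT u hPu hne
  have hle4 := SP.norm_Aop_le hπ hsym hT u
  have hc4b : c < 4 := by nlinarith [hqpos]
  linarith
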